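/- Let X, A, B be types and let f be a subdistribution kernel from X to A × B. Then there exist a subdistribution kernel m from X to A and a subdistribution kernel c from A × X to B such that c is quasi-total and f x (a, b) = m x a * c (a, x) b for all x : X, a : A, b : B. (This is the existence of quasi-total conditionals in the Kleisli category of the finitary subdistribution monad, making it a partial Markov category.) -/

import Mathlib

open scoped ENNReal

/-- Existence of quasi-total conditionals for subdistribution kernels:
the Kleisli category of the finitary subdistribution monad is a partial Markov
category. -/
theorem subdistKernel_exists_quasiTotal_conditional
    {X A B : Type*} (f : X → A × B → ℝ≥0∞) (hf : ∀ x, ∑' p, f x p ≤ 1) :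
    ∃ (m : X → A → ℝ≥0∞) (c : A × X → B → ℝ≥0∞),
      (∀ x, ∑' a, m x a ≤ 1) ∧
      (∀ p, ∑' b, c p b ≤ 1) ∧
      (∀ p, (∑' b, c p b) = 0 ∨ (∑' b, c p b) = 1) ∧
      (∀ x a b, f x (a, b) = m x a * c (a, x) b) := by
  set m : X → A → ℝ≥0∞ := fun x a => ∑' b, f x (a, b) with hm
  have hmle : ∀ x a, m x a ≤ 1 := fun x a => by
    calc m x a ≤ ∑' a, m x a := ENNReal.le_tsum a
    _ = ∑' p : A × B, f x p := (ENNReal.tsum_prod (f := fun a b => f x (a, b))).symm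
    _ ≤ 1 := hf x
  have hmne : ∀ x a, m x a ≠ ⊤ := fun x a => (lt_of_le_of_lt (hmle x a) (by simp)).ne
  refine ⟨m, fun p b => f p.2 (p.1, b) / m p.2 p.1, ?_, ?_, ?_, ?_⟩
  · intro x
    calc (∑' a, m x a) = ∑' p : A × B, f x p :=
      (ENNReal.tsum_prod (f := fun a b => f x (a, b))).symm
    _ ≤ 1 := hf x
  · intro ⟨a, x⟩
    simp only [div_eq_mul_inv, ENNReal.tsum_mul_right]
    have hr : (∑' b, f x (a, b)) = m x a := rfl
    rw [hr]
    rcases eq_or_ne (m x a) 0 with h | h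
    · simp [h]
    · rw [ENNReal.mul_inv_cancel h (hmne x a)]
  · intro ⟨a, x⟩
    simp only [div_eq_mul_inv, ENNReal.tsum_mul_right]
    have hr : (∑' b, f x (a, b)) = m x a := rfl
    rw [hr]
    rcases eq_or_ne (m x a) 0 with h | h
    · left; simp [h]
    · right; rw [ENNReal.mul_inv_cancel h (hmne x a)]
  · intro x a b
    rcases eq_or_ne (m x a) 0 with h | h
    · have : f x (a, b) = 0 := by
        have h2 := ENNReal.le_tsum (f := fun b => f x (a, b)) b
        have hr : (∑' b, f x (a, b)) = m x a := rfl
        rw [hr, h] at h2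
        simpa using h2
      simp [this, h]
    · rw [ENNReal.mul_div_cancel h (hmne x a)]
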